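/- Let Γ be the presented group with generators g, h, f and relations h g h⁻¹ = g⁻¹, h f h⁻¹ = f⁻¹, and g f = f g. Then every element x of Γ can be written in the form g^k · h^l · f^m for integers k, l, m, and the triple (k, l, m) is uniquely determined by x. -/

import Mathlib

/-- The relator set of the presented group
`Γ = ⟨g, h, f | h g h⁻¹ = g⁻¹, h f h⁻¹ = f⁻¹, g f = f g⟩`,
the fundamental group of the spherical tangent bundle of the Klein bottle.
Generator `0` is `g`, generator `1` is `h`, generator `2` is `f`. -/
def kleinSTRels : Set (FreeGroup (Fin 3)) :=
  { FreeGroup.of 1 * FreeGroup.of 0 * (FreeGroup.of 1)⁻¹ * FreeGroup.of 0,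
    FreeGroup.of 1 * FreeGroup.of 2 * (FreeGroup.of 1)⁻¹ * FreeGroup.of 2,
    FreeGroup.of 0 * FreeGroup.of 2 * (FreeGroup.of 0)⁻¹ * (FreeGroup.of 2)⁻¹ }

/-- The presented group `⟨g, h, f | h g h⁻¹ = g⁻¹, h f h⁻¹ = f⁻¹, g f = f g⟩`. -/
abbrev KleinST : Type := PresentedGroup kleinSTRels

def KleinST.g : KleinST := PresentedGroup.of 0
def KleinST.h : KleinST := PresentedGroup.of 1
def KleinST.f : KleinST := PresentedGroup.of 2

namespace KleinNF

def e (l : ℤ) : ℤ := (((-1 : ℤˣ) ^ l : ℤˣ) : ℤ)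

lemma e_add (a b : ℤ) : e (a + b) = e a * e b := by
  unfold e; rw [zpow_add, Units.val_mul]

@[simp] lemma e_zero : e 0 = 1 := by simp [e]
@[simp] lemma e_one : e 1 = -1 := by simp [e]

@[simp] lemma e_mul_self (a : ℤ) : e a * e a = 1 := by
  unfold e; rw [← Units.val_mul, Int.units_mul_self, Units.val_one]

@[simp] lemma e_neg (a : ℤ) : e (-a) = e a := by
  unfold e; rw [zpow_neg, Int.units_inv_eq_self]

-- general conjugation lemma
variable {G : Type*} [Group G]

lemma conj_rel_zpow {a b : G} (hab : a * b * a⁻¹ = b⁻¹) (k : ℤ) :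
    a * b ^ k * a⁻¹ = b ^ (-k) := by
  rw [← conj_zpow, hab, inv_zpow, ← zpow_neg]

lemma conj_rel_zpow' {a b : G} (hab : a * b * a⁻¹ = b⁻¹) (k : ℤ) :
    a⁻¹ * b ^ k * a = b ^ (-k) := by
  have h3 : a⁻¹ * b⁻¹ * a = b := by rw [← hab]; group
  have h2 : a⁻¹ * b * a = b⁻¹ := by
    calc a⁻¹ * b * a = (a⁻¹ * b⁻¹ * a)⁻¹ := by group
      _ = b⁻¹ := by rw [h3]
  calc a⁻¹ * b ^ k * a = (a⁻¹ * b * a) ^ k := by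
        have := conj_zpow (i := k) (a := a⁻¹) (b := b); simpa using this.symm
    _ = b ^ (-k) := by rw [h2, inv_zpow, ← zpow_neg]

lemma zpow_swap {a b : G} (hab : a * b * a⁻¹ = b⁻¹) (l : ℤ) :
    ∀ k : ℤ, a ^ l * b ^ k = b ^ (e l * k) * a ^ l := by
  induction l using Int.induction_on with
  | zero => intro k; simp
  | succ n ih =>
      intro k
      have step : a * b ^ k = b ^ (-k) * a := by
        rw [← conj_rel_zpow hab k]; group
      calc a ^ ((n:ℤ)+1) * b ^ k
          = a ^ (n:ℤ) * (a * b ^ k) := by rw [zpow_add_one, mul_assoc]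
        _ = a ^ (n:ℤ) * (b ^ (-k) * a) := by rw [step]
        _ = (a ^ (n:ℤ) * b ^ (-k)) * a := by rw [mul_assoc]
        _ = (b ^ (e (n:ℤ) * -k) * a ^ (n:ℤ)) * a := by rw [ih]
        _ = b ^ (e ((n:ℤ)+1) * k) * a ^ ((n:ℤ)+1) := by
            rw [mul_assoc, ← zpow_add_one,
              show e ((n:ℤ)+1)*k = e (n:ℤ) * -k from by rw [e_add, e_one]; ring]
  | pred n ih =>
      intro k
      have step : a⁻¹ * b ^ k = b ^ (-k) * a⁻¹ := by
        rw [← conj_rel_zpow' hab k]; group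
      calc a ^ ((-n:ℤ)-1) * b ^ k
          = a ^ (-n:ℤ) * (a⁻¹ * b ^ k) := by rw [zpow_sub_one, mul_assoc]
        _ = a ^ (-n:ℤ) * (b ^ (-k) * a⁻¹) := by rw [step]
        _ = (a ^ (-n:ℤ) * b ^ (-k)) * a⁻¹ := by rw [mul_assoc]
        _ = (b ^ (e (-n:ℤ) * -k) * a ^ (-n:ℤ)) * a⁻¹ := by rw [ih]
        _ = b ^ (e ((-n:ℤ)-1) * k) * a ^ ((-n:ℤ)-1) := by
            rw [mul_assoc, ← zpow_sub_one,
              show e ((-n:ℤ)-1)*k = e (-n:ℤ) * -k from by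
                rw [sub_eq_add_neg, e_add]; simp only [e_neg, e_one]; ring]

-- relations in KleinST

lemma rel_mk (r : FreeGroup (Fin 3)) (hr : r ∈ kleinSTRels) :
    (QuotientGroup.mk r : KleinST) = 1 :=
  (QuotientGroup.eq_one_iff r).2 (Subgroup.subset_normalClosure hr)

open KleinST

lemma rel1 : h * g * h⁻¹ = g⁻¹ := by
  have h2 : h * g * h⁻¹ * g = 1 := rel_mk _ (Or.inl rfl)
  exact eq_inv_of_mul_eq_one_left h2

lemma rel2 : h * f * h⁻¹ = f⁻¹ := by
  have h2 : h * f * h⁻¹ * f = 1 := rel_mk _ (by right; left; rfl)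
  exact eq_inv_of_mul_eq_one_left h2

lemma rel3 : g * f = f * g := by
  have h2 : g * f * g⁻¹ * f⁻¹ = 1 := rel_mk _ (by right; right; rfl)
  have h3 : g * f * g⁻¹ = f := by simpa using eq_inv_of_mul_eq_one_left h2
  calc g * f = (g * f * g⁻¹) * g := by group
    _ = f * g := by rw [h3]


@[simp] lemma e_sq (a : ℤ) : e a ^ 2 = 1 := by rw [sq, e_mul_self]

@[ext] structure M where
  k : ℤ
  l : ℤ
  m : ℤ

instance : Mul M := ⟨fun a b => ⟨a.k + e a.l * b.k, a.l + b.l, e b.l * a.m + b.m⟩⟩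
instance : One M := ⟨⟨0, 0, 0⟩⟩
instance : Inv M := ⟨fun a => ⟨-(e a.l * a.k), -a.l, -(e a.l * a.m)⟩⟩

@[simp] lemma M_mul (a b : M) :
    a * b = ⟨a.k + e a.l * b.k, a.l + b.l, e b.l * a.m + b.m⟩ := rfl
@[simp] lemma M_one : (1 : M) = ⟨0, 0, 0⟩ := rfl
@[simp] lemma M_inv (a : M) : a⁻¹ = ⟨-(e a.l * a.k), -a.l, -(e a.l * a.m)⟩ := rfl

instance : Group M where
  mul_assoc a b c := by ext <;> simp [e_add] <;> ring
  one_mul a := by ext <;> simp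
  mul_one a := by ext <;> simp
  inv_mul_cancel a := by
    ext <;> simp [e_add] <;> ring_nf <;> simp [sq, mul_assoc]

def fn : Fin 3 → M := ![⟨1, 0, 0⟩, ⟨0, 1, 0⟩, ⟨0, 0, 1⟩]

lemma fn_rel : ∀ r ∈ kleinSTRels, FreeGroup.lift fn r = 1 := by
  intro r hr
  simp only [kleinSTRels, Set.mem_insert_iff, Set.mem_singleton_iff] at hr
  rcases hr with rfl | rfl | rfl <;>
    · simp only [map_mul, map_inv, FreeGroup.lift_apply_of]
      ext <;> simp [fn] <;> ring

noncomputable def phi : KleinST →* M := PresentedGroup.toGroup fn_rel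

@[simp] lemma phi_g : phi g = ⟨1, 0, 0⟩ := PresentedGroup.toGroup.of fn_rel
@[simp] lemma phi_h : phi h = ⟨0, 1, 0⟩ := PresentedGroup.toGroup.of fn_rel
@[simp] lemma phi_f : phi f = ⟨0, 0, 1⟩ := PresentedGroup.toGroup.of fn_rel

lemma A_zpow (k : ℤ) : (⟨1, 0, 0⟩ : M) ^ k = ⟨k, 0, 0⟩ := by
  induction k using Int.induction_on with
  | zero => simp
  | succ n ih => rw [zpow_add_one, ih]; ext <;> simp
  | pred n ih => rw [zpow_sub_one, ih]; ext <;> simp <;> ring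

lemma B_zpow (k : ℤ) : (⟨0, 1, 0⟩ : M) ^ k = ⟨0, k, 0⟩ := by
  induction k using Int.induction_on with
  | zero => simp
  | succ n ih => rw [zpow_add_one, ih]; ext <;> simp
  | pred n ih => rw [zpow_sub_one, ih]; ext <;> simp <;> ring

lemma C_zpow (k : ℤ) : (⟨0, 0, 1⟩ : M) ^ k = ⟨0, 0, k⟩ := by
  induction k using Int.induction_on with
  | zero => simp
  | succ n ih => rw [zpow_add_one, ih]; ext <;> simp
  | pred n ih => rw [zpow_sub_one, ih]; ext <;> simp <;> ring

/-- The normal form. -/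
noncomputable def nf (t : ℤ × ℤ × ℤ) : KleinST := g ^ t.1 * h ^ t.2.1 * f ^ t.2.2

lemma phi_nf (t : ℤ × ℤ × ℤ) : phi (nf t) = ⟨t.1, t.2.1, t.2.2⟩ := by
  rw [nf, map_mul, map_mul, map_zpow, map_zpow, map_zpow, phi_g, phi_h, phi_f,
    A_zpow, B_zpow, C_zpow]
  ext <;> simp

lemma nf_inj {t t' : ℤ × ℤ × ℤ} (h : nf t = nf t') : t = t' := by
  have := congrArg phi h
  rw [phi_nf, phi_nf] at this
  obtain ⟨h1, h2, h3⟩ := M.mk.injEq .. ▸ this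
  exact Prod.ext h1 (Prod.ext h2 h3)

lemma fh (l m : ℤ) : f ^ m * h ^ l = h ^ l * f ^ (e l * m) := by
  have := zpow_swap rel2 l (e l * m)
  rw [← mul_assoc, e_mul_self, one_mul] at this
  exact this.symm

lemma nf_mul (t t' : ℤ × ℤ × ℤ) :
    nf t * nf t' = nf (t.1 + e t.2.1 * t'.1, t.2.1 + t'.2.1,
      e t'.2.1 * t.2.2 + t'.2.2) := by
  obtain ⟨k, l, m⟩ := t; obtain ⟨k', l', m'⟩ := t'
  have c1 : f ^ m * g ^ k' = g ^ k' * f ^ m :=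
    (Commute.zpow_zpow (by exact rel3.symm) m k')
  simp only [nf]
  calc g ^ k * h ^ l * f ^ m * (g ^ k' * h ^ l' * f ^ m')
      = g ^ k * h ^ l * (f ^ m * g ^ k') * (h ^ l' * f ^ m') := by group
    _ = g ^ k * (h ^ l * g ^ k') * ((f ^ m * h ^ l') * f ^ m') := by rw [c1]; group
    _ = g ^ k * (g ^ (e l * k') * h ^ l) * ((h ^ l' * f ^ (e l' * m)) * f ^ m') := by
        rw [zpow_swap rel1 l k', fh l' m]
    _ = g ^ (k + e l * k') * h ^ (l + l') * f ^ (e l' * m + m') := by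
        rw [zpow_add, zpow_add, zpow_add]; group

lemma nf_inv (t : ℤ × ℤ × ℤ) :
    (nf t)⁻¹ = nf (-(e t.2.1 * t.1), -t.2.1, -(e t.2.1 * t.2.2)) := by
  symm
  apply eq_inv_of_mul_eq_one_left
  rw [nf_mul]
  obtain ⟨k, l, m⟩ := t
  simp only [nf]
  have h1 : -(e l * k) + e (-l) * k = 0 := by simp
  have h2 : (-l : ℤ) + l = 0 := by ring
  have h3 : e l * -(e l * m) + m = 0 := by
    rw [mul_neg, ← mul_assoc, e_mul_self]; ring
  rw [h1, h2, h3]; simp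

def S : Subgroup KleinST where
  carrier := Set.range nf
  one_mem' := ⟨(0, 0, 0), by simp [nf]⟩
  mul_mem' := by rintro _ _ ⟨t, rfl⟩ ⟨t', rfl⟩; exact ⟨_, (nf_mul t t').symm⟩
  inv_mem' := by rintro _ ⟨t, rfl⟩; exact ⟨_, (nf_inv t).symm⟩

lemma mem_S (x : KleinST) : x ∈ S := by
  have hle : Subgroup.closure (Set.range (PresentedGroup.of (rels := kleinSTRels))) ≤ S := by
    rw [Subgroup.closure_le]
    rintro _ ⟨i, rfl⟩
    fin_cases i
    · exact ⟨(1, 0, 0), by simp [nf, KleinST.g]⟩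
    · exact ⟨(0, 1, 0), by simp [nf, KleinST.h]⟩
    · exact ⟨(0, 0, 1), by simp [nf, KleinST.f]⟩
  rw [PresentedGroup.closure_range_of] at hle
  exact hle (Subgroup.mem_top x)

end KleinNF

/-- Every element of `Γ = ⟨g, h, f | h g h⁻¹ = g⁻¹, h f h⁻¹ = f⁻¹, g f = f g⟩` can be
written uniquely as `g ^ k * h ^ l * f ^ m` for integers `k, l, m`. -/
theorem kleinST_normal_form (x : KleinST) :
    ∃! t : ℤ × ℤ × ℤ, x = KleinST.g ^ t.1 * KleinST.h ^ t.2.1 * KleinST.f ^ t.2.2 := by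
  obtain ⟨t, rfl⟩ := KleinNF.mem_S x
  refine ⟨t, rfl, fun t' ht' => ?_⟩
  exact (KleinNF.nf_inj ht'.symm)
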